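/- Let L be a finite atomistic lattice. For every x ∈ L, the set xξ = {a ∈ At(L) : a ≤ x} is a flat of the simplicial complex 𝒯_L = (At(L), T_L). -/

import Mathlib

universe u v

/-- `F ⊆ V` is a flat of the simplicial complex `(V, H)`: for every `I ∈ H` with
`I ⊆ F` and every `p ∈ V \ F`, `I ∪ {p} ∈ H`. -/
def IsCFlat {α : Type u} (V : Set α) (H : Set (Set α)) (F : Set α) : Prop :=
  F ⊆ V ∧ ∀ I ∈ H, I ⊆ F → ∀ p ∈ V \ F, insert p I ∈ H

/-- `(V, H)` is a finite simplicial complex: `V` is finite and nonempty, and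
`H ⊆ 2^V` is nonempty and closed under taking subsets. -/
def IsCpx {α : Type u} (V : Set α) (H : Set (Set α)) : Prop :=
  V.Finite ∧ V.Nonempty ∧ H.Nonempty ∧ (∀ X ∈ H, X ⊆ V) ∧ ∀ X ∈ H, ∀ Y ⊆ X, Y ∈ H

/-- `X` is a transversal of the successive differences for some chain
`F 0 ⊂ F 1 ⊂ … ⊂ F k` of flats of `(V, H)`: `X` admits an enumeration
`x 0, …, x (k-1)` with `x i ∈ F (i+1) \ F i`. -/
def TransvSD {α : Type u} (V : Set α) (H : Set (Set α)) (X : Set α) : Prop :=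
  ∃ (k : ℕ) (F : Fin (k + 1) → Set α) (x : Fin k → α),
    (∀ i, IsCFlat V H (F i)) ∧ StrictMono F ∧
    Function.Injective x ∧ X = Set.range x ∧
    ∀ i : Fin k, x i ∈ F i.succ \ F i.castSucc

/-- `(V, H)` is boolean representable: every `X ∈ H` is a transversal of the
successive differences for some chain of flats of `(V, H)`. -/
def BoolRep {α : Type u} (V : Set α) (H : Set (Set α)) : Prop :=
  ∀ X ∈ H, TransvSD V H X

/-- `xξ` : the set of atoms of `L` lying below `x`. -/
def latxi (L : Type u) [Lattice L] [OrderBot L] (x : L) : Set L :=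
  {a | IsAtom a ∧ a ≤ x}

/-- `T_L` : the set of transversals of chains in `L`, i.e. sets of atoms `A`
admitting an enumeration `e 0, …, e (m-1)` and a chain `c 0 < … < c m` in `L`
with `e i ∈ (c (i+1))ξ \ (c i)ξ`. -/
def TLat (L : Type u) [Lattice L] [OrderBot L] : Set (Set L) :=
  {A | ∃ (m : ℕ) (c : Fin (m + 1) → L) (e : Fin m → L), StrictMono c ∧
      Function.Injective e ∧ A = Set.range e ∧
      ∀ i : Fin m, e i ∈ latxi L (c i.succ) \ latxi L (c i.castSucc)}

/-- A lattice is atomistic if every element is a join of atoms. -/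
def AtomisticLat (L : Type u) [Lattice L] [OrderBot L] : Prop :=
  ∀ x : L, ∃ s : Finset L, (∀ a ∈ s, IsAtom a) ∧ x = s.sup id

/-- For a finite atomistic lattice `L`, every set `xξ = {a ∈ At(L) : a ≤ x}`
is a flat of the simplicial complex `𝒯_L = (At(L), T_L)`. -/
theorem stmt9 (L : Type u) [Lattice L] [Fintype L] [OrderBot L]
    (hA : AtomisticLat L) :
    ∀ x : L, IsCFlat {a : L | IsAtom a} (TLat L) (latxi L x) := by
  intro x
  constructor
  · intro a ha; exact ha.1
  · rintro I ⟨m, c, e, hc, he, rfl, hmem⟩ hIx p hp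
    have hpa : IsAtom p := hp.1
    have hpx : ¬ p ≤ x := fun h => hp.2 ⟨hp.1, h⟩
    have hex : ∀ i, e i ≤ x := fun i => (hIx ⟨i, rfl⟩).2
    have hnep : ∀ i, e i ≠ p := fun i h => hpx (h ▸ hex i)
    set d : Fin (m + 1) → L := fun i => c i ⊓ x with hd
    refine ⟨m + 1, Fin.snoc d (d (Fin.last m) ⊔ p), Fin.snoc e p, ?_, ?_, ?_, ?_⟩
    · rw [Fin.strictMono_iff_lt_succ]
      intro i
      induction i using Fin.lastCases with
      | last =>
        rw [Fin.succ_last, Fin.snoc_castSucc, Fin.snoc_last]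
        refine lt_of_le_of_ne le_sup_left (fun h => hpx ?_)
        exact le_trans (h ▸ le_sup_right) inf_le_right
      | cast j =>
        rw [Fin.succ_castSucc, Fin.snoc_castSucc, Fin.snoc_castSucc]
        refine lt_of_le_of_ne (inf_le_inf_right x (le_of_lt (hc (Fin.castSucc_lt_succ (i := j))))) ?_
        intro h
        have h1 : e j ≤ d j.succ := le_inf (hmem j).1.2 (hex j)
        exact (hmem j).2 ⟨(hmem j).1.1, le_trans (h ▸ h1) inf_le_left⟩
    · intro a b hab
      induction a using Fin.lastCases with
      | last =>
        induction b using Fin.lastCases with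
        | last => rfl
        | cast j =>
          rw [Fin.snoc_last, Fin.snoc_castSucc] at hab
          exact absurd hab.symm (hnep j)
      | cast i =>
        induction b using Fin.lastCases with
        | last =>
          rw [Fin.snoc_last, Fin.snoc_castSucc] at hab
          exact absurd hab (hnep i)
        | cast j =>
          rw [Fin.snoc_castSucc, Fin.snoc_castSucc] at hab
          exact congrArg Fin.castSucc (he hab)
    · ext a
      simp only [Set.mem_insert_iff, Set.mem_range]
      constructor
      · rintro (rfl | ⟨i, rfl⟩)
        · exact ⟨Fin.last m, Fin.snoc_last _ _⟩
        · exact ⟨i.castSucc, Fin.snoc_castSucc _ _ _⟩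
      · rintro ⟨i, rfl⟩
        induction i using Fin.lastCases with
        | last => left; rw [Fin.snoc_last]
        | cast j => right; exact ⟨j, by rw [Fin.snoc_castSucc]⟩
    · intro i
      induction i using Fin.lastCases with
      | last =>
        rw [Fin.succ_last]
        constructor
        · rw [Fin.snoc_last, Fin.snoc_last]
          exact ⟨hpa, le_sup_right⟩
        · rw [Fin.snoc_last, Fin.snoc_castSucc]
          exact fun h => hpx (le_trans h.2 inf_le_right)
      | cast j =>
        rw [Fin.succ_castSucc]
        constructor
        · rw [Fin.snoc_castSucc, Fin.snoc_castSucc]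
          exact ⟨(hmem j).1.1, le_inf (hmem j).1.2 (hex j)⟩
        · rw [Fin.snoc_castSucc, Fin.snoc_castSucc]
          exact fun h => (hmem j).2 ⟨h.1, le_trans h.2 inf_le_left⟩
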